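/- Additivity of day addition: for every valid date D and all integers n and k, (D +D n) +D k = D +D (n + k). -/
import Mathlib


/-- A date is a triple of integers (year, month, day). -/
structure Date where
  y : ℤ
  m : ℤ
  d : ℤ

/-- A year is a leap year iff divisible by 4 and (not by 100, or by 400). -/
def isLeap (y : ℤ) : Prop :=
  y % 4 = 0 ∧ (y % 100 ≠ 0 ∨ y % 400 = 0)

/-- Number of days in month `m` of year `y`. -/
def nbdays (y m : ℤ) : ℤ :=
  if m = 4 ∨ m = 6 ∨ m = 9 ∨ m = 11 then 30
  else if m = 2 then
    (if y % 4 = 0 ∧ (y % 100 ≠ 0 ∨ y % 400 = 0) then 29 else 28)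
  else 31

/-- A date is valid iff `1 ≤ m ≤ 12` and `1 ≤ d ≤ nbdays y m`. -/
def Date.valid (D : Date) : Prop :=
  1 ≤ D.m ∧ D.m ≤ 12 ∧ 1 ≤ D.d ∧ D.d ≤ nbdays D.y D.m

/-- Month addition `(y, m, d) +m n`, with round-down of the day component. -/
def addMonths (D : Date) (n : ℤ) : Date :=
  ⟨D.y + (D.m - 1 + n) / 12,
   1 + (D.m - 1 + n) % 12,
   min D.d (nbdays (D.y + (D.m - 1 + n) / 12) (1 + (D.m - 1 + n) % 12))⟩

/-- A configuration of the small-step day-addition machine: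
either a pending addition `D +D n`, or a finished date. -/
inductive Conf where
  | pending (D : Date) (n : ℤ)
  | done (D : Date)

/-- Small-step rules for day addition `+D`. -/
inductive Step : Conf → Conf → Prop where
  | add_days {y m d n : ℤ}
      (h1 : 1 ≤ d + n) (h2 : d + n ≤ nbdays y m) :
      Step (Conf.pending ⟨y, m, d⟩ n) (Conf.done ⟨y, m, d + n⟩)
  | add_days_over {y m d n : ℤ}
      (h : d + n > nbdays y m) :
      Step (Conf.pending ⟨y, m, d⟩ n)
        (Conf.pending (addMonths ⟨y, m, 1⟩ 1) (n - (nbdays y m - d) - 1))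
  | add_days_under1 {y m d n : ℤ}
      (h1 : 1 < d) (h2 : d + n ≤ 0) :
      Step (Conf.pending ⟨y, m, d⟩ n) (Conf.pending ⟨y, m, 1⟩ (d - 1 + n))
  | add_days_under2 {y m n y' m' : ℤ}
      (h1 : 1 + n ≤ 0) (h2 : addMonths ⟨y, m, 1⟩ (-1) = ⟨y', m', 1⟩) :
      Step (Conf.pending ⟨y, m, 1⟩ n) (Conf.pending ⟨y', m', 1⟩ (n + nbdays y' m'))

/-- Reduction in finitely many steps. -/
def Reduces : Conf → Conf → Prop := Relation.ReflTransGen Step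

instance : Nonempty Date := ⟨⟨2000, 3, 1⟩⟩

/-- `addDays D n` is the unique valid normal form of `D +D n`
(when it exists; arbitrary otherwise). -/
noncomputable def addDays (D : Date) (n : ℤ) : Date :=
  Classical.epsilon fun D' : Date =>
    D'.valid ∧ Reduces (Conf.pending D n) (Conf.done D')

/-- Date-period addition `D +P (ny, nm, nd) = (D +m (12·ny + nm)) +D nd`. -/
noncomputable def addPeriod (D : Date) (P : ℤ × ℤ × ℤ) : Date :=
  addDays (addMonths D (12 * P.1 + P.2.1)) P.2.2

/-- Lexicographic order on dates. -/
def Date.le (a b : Date) : Prop :=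
  a.y < b.y ∨ (a.y = b.y ∧ a.m < b.m) ∨ (a.y = b.y ∧ a.m = b.m ∧ a.d ≤ b.d)

/-- Strict lexicographic order on dates. -/
def Date.lt (a b : Date) : Prop :=
  a.y < b.y ∨ (a.y = b.y ∧ a.m < b.m) ∨ (a.y = b.y ∧ a.m = b.m ∧ a.d < b.d)

/-- The epoch date: March 1, 2000. -/
def epoch : Date := ⟨2000, 3, 1⟩

/-- `toDelta D` is the unique integer `n` with `epoch +D n = D`
(when it exists; arbitrary otherwise). -/
noncomputable def toDelta (D : Date) : ℤ :=
  Classical.epsilon fun n : ℤ => addDays epoch n = D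


/- ------------------ auxiliary lemmas ------------------ -/

lemma nbdays_ge (y m : ℤ) : 28 ≤ nbdays y m := by
  unfold nbdays; split_ifs <;> norm_num

lemma start_valid {y m : ℤ} (h1 : 1 ≤ m) (h2 : m ≤ 12) : (⟨y, m, 1⟩ : Date).valid := by
  refine ⟨h1, h2, le_refl 1, ?_⟩
  show (1:ℤ) ≤ nbdays y m
  have := nbdays_ge y m; omega

lemma addMonths_next (y m : ℤ) :
    addMonths ⟨y, m, 1⟩ 1 = ⟨y + m / 12, 1 + m % 12, 1⟩ := by
  have e : m - 1 + 1 = m := by ring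
  unfold addMonths
  simp only [e]
  have h := nbdays_ge (y + m / 12) (1 + m % 12)
  simp only [Date.mk.injEq]
  exact ⟨trivial, trivial, by omega⟩

lemma addMonths_prev (y m : ℤ) :
    addMonths ⟨y, m, 1⟩ (-1) = ⟨y + (m - 2) / 12, 1 + (m - 2) % 12, 1⟩ := by
  have e : m - 1 + (-1) = m - 2 := by ring
  unfold addMonths
  simp only [e]
  have h := nbdays_ge (y + (m - 2) / 12) (1 + (m - 2) % 12)
  simp only [Date.mk.injEq]
  exact ⟨trivial, trivial, by omega⟩

lemma prev_next (y m : ℤ) (h1 : 1 ≤ m) (h12 : m ≤ 12) :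
    addMonths ⟨y + m / 12, 1 + m % 12, 1⟩ (-1) = ⟨y, m, 1⟩ := by
  rw [addMonths_prev]
  simp only [Date.mk.injEq]
  refine ⟨by omega, by omega, trivial⟩

lemma step_det {a b c : Conf} (hb : Step a b) (hc : Step a c) : b = c := by
  cases hb with
  | @add_days y m d n h1 h2 =>
    cases hc with
    | add_days h1' h2' => rfl
    | add_days_over h => omega
    | add_days_under1 h1' h2' => omega
    | add_days_under2 h1' h2' => omega
  | @add_days_over y m d n h =>
    cases hc with
    | add_days h1' h2' => omega
    | add_days_over h' => rfl
    | add_days_under1 h1' h2' => have := nbdays_ge y m; omega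
    | add_days_under2 h1' h2' => have := nbdays_ge y m; omega
  | @add_days_under1 y m d n h1 h2 =>
    cases hc with
    | add_days h1' h2' => omega
    | add_days_over h' => have := nbdays_ge y m; omega
    | add_days_under1 h1' h2' => rfl
    | add_days_under2 h1' h2' => omega
  | @add_days_under2 y m n y' m' h1 h2 =>
    cases hc with
    | add_days h1' h2' => omega
    | add_days_over h' => have := nbdays_ge y m; omega
    | add_days_under1 h1' h2' => omega
    | @add_days_under2 _ _ _ y'' m'' h1' h2' =>
      rw [h2] at h2'
      injection h2' with e1 e2 e3
      subst e1; subst e2; rfl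

lemma step_done_reduces {a b : Conf} {D : Date} (h : Step a b)
    (hr : Reduces a (Conf.done D)) : Reduces b (Conf.done D) := by
  rcases Relation.ReflTransGen.cases_head hr with heq | ⟨c, hc, hcr⟩
  · subst heq; cases h
  · exact (step_det h hc) ▸ hcr

lemma nf_unique {c : Conf} {A B : Date} (hA : Reduces c (Conf.done A)) :
    Reduces c (Conf.done B) → A = B := by
  induction hA using Relation.ReflTransGen.head_induction_on with
  | refl =>
    intro hB
    rcases Relation.ReflTransGen.cases_head hB with heq | ⟨c', hc', _⟩
    · injection heq
    · cases hc'
  | head h _ ih =>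
    intro hB
    exact ih (step_done_reduces h hB)

lemma mk_valid {y m d : ℤ} (h1 : 1 ≤ m) (h2 : m ≤ 12) (h3 : 1 ≤ d)
    (h4 : d ≤ nbdays y m) : (⟨y, m, d⟩ : Date).valid := ⟨h1, h2, h3, h4⟩

lemma ex_start : ∀ (N : ℕ) (n y m : ℤ), n.natAbs ≤ N → 1 ≤ m → m ≤ 12 →
    ∃ D' : Date, D'.valid ∧ Reduces (Conf.pending ⟨y, m, 1⟩ n) (Conf.done D') := by
  intro N
  induction N with
  | zero =>
    intro n y m hn h1 h12
    have hn0 : n = 0 := by omega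
    subst hn0
    have hnb := nbdays_ge y m
    exact ⟨⟨y, m, 1 + 0⟩, mk_valid h1 h12 (by omega) (by omega),
      Relation.ReflTransGen.single (Step.add_days (by omega) (by omega))⟩
  | succ N ih =>
    intro n y m hn h1 h12
    have hnb := nbdays_ge y m
    by_cases hc1 : 0 ≤ n ∧ n ≤ nbdays y m - 1
    · exact ⟨⟨y, m, 1 + n⟩, mk_valid h1 h12 (by omega) (by omega),
        Relation.ReflTransGen.single (Step.add_days (by omega) (by omega))⟩
    · by_cases hc2 : nbdays y m ≤ n
      · have hstep : Step (Conf.pending ⟨y, m, 1⟩ n)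
            (Conf.pending ⟨y + m / 12, 1 + m % 12, 1⟩ (n - nbdays y m)) := by
          have h := Step.add_days_over (y := y) (m := m) (d := 1) (n := n) (by omega)
          rw [addMonths_next] at h
          have e : n - (nbdays y m - 1) - 1 = n - nbdays y m := by ring
          rwa [e] at h
        obtain ⟨D', hv, hr⟩ := ih (n - nbdays y m) (y + m / 12) (1 + m % 12)
          (by omega) (by omega) (by omega)
        exact ⟨D', hv, Relation.ReflTransGen.head hstep hr⟩
      · have hneg : n ≤ -1 := by omega
        have hnb' := nbdays_ge (y + (m - 2) / 12) (1 + (m - 2) % 12)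
        have hstep : Step (Conf.pending ⟨y, m, 1⟩ n)
            (Conf.pending ⟨y + (m - 2) / 12, 1 + (m - 2) % 12, 1⟩
              (n + nbdays (y + (m - 2) / 12) (1 + (m - 2) % 12))) :=
          Step.add_days_under2 (by omega) (addMonths_prev y m)
        by_cases hc3 : 0 ≤ n + nbdays (y + (m - 2) / 12) (1 + (m - 2) % 12)
        · exact ⟨⟨y + (m - 2) / 12, 1 + (m - 2) % 12,
              1 + (n + nbdays (y + (m - 2) / 12) (1 + (m - 2) % 12))⟩,
            mk_valid (by omega) (by omega) (by omega) (by omega),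
            Relation.ReflTransGen.head hstep
              (Relation.ReflTransGen.single (Step.add_days (by omega) (by omega)))⟩
        · obtain ⟨D', hv, hr⟩ := ih (n + nbdays (y + (m - 2) / 12) (1 + (m - 2) % 12))
            (y + (m - 2) / 12) (1 + (m - 2) % 12) (by omega) (by omega) (by omega)
          exact ⟨D', hv, Relation.ReflTransGen.head hstep hr⟩

lemma ex_all (D : Date) (hD : D.valid) (n : ℤ) :
    ∃ D' : Date, D'.valid ∧ Reduces (Conf.pending D n) (Conf.done D') := by
  obtain ⟨y, m, d⟩ := D
  obtain ⟨h1, h12, hd1, hd2⟩ := hD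
  replace h1 : 1 ≤ m := h1
  replace h12 : m ≤ 12 := h12
  replace hd1 : 1 ≤ d := hd1
  replace hd2 : d ≤ nbdays y m := hd2
  have hnb := nbdays_ge y m
  by_cases hc1 : 1 ≤ d + n ∧ d + n ≤ nbdays y m
  · exact ⟨⟨y, m, d + n⟩, mk_valid h1 h12 hc1.1 hc1.2,
      Relation.ReflTransGen.single (Step.add_days hc1.1 hc1.2)⟩
  · by_cases hc2 : nbdays y m < d + n
    · have hstep : Step (Conf.pending ⟨y, m, d⟩ n)
          (Conf.pending ⟨y + m / 12, 1 + m % 12, 1⟩ (d + n - nbdays y m - 1)) := by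
        have h := Step.add_days_over (y := y) (m := m) (d := d) (n := n) (by omega)
        rw [addMonths_next] at h
        have e : n - (nbdays y m - d) - 1 = d + n - nbdays y m - 1 := by ring
        rwa [e] at h
      obtain ⟨D', hv, hr⟩ := ex_start (d + n - nbdays y m - 1).natAbs
        (d + n - nbdays y m - 1) (y + m / 12) (1 + m % 12) le_rfl (by omega) (by omega)
      exact ⟨D', hv, Relation.ReflTransGen.head hstep hr⟩
    · by_cases hd : 1 < d
      · have hstep : Step (Conf.pending ⟨y, m, d⟩ n)
            (Conf.pending ⟨y, m, 1⟩ (d - 1 + n)) :=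
          Step.add_days_under1 hd (by omega)
        obtain ⟨D', hv, hr⟩ := ex_start (d - 1 + n).natAbs (d - 1 + n) y m le_rfl h1 h12
        exact ⟨D', hv, Relation.ReflTransGen.head hstep hr⟩
      · have hd1' : d = 1 := by omega
        subst hd1'
        exact ex_start n.natAbs n y m le_rfl h1 h12

lemma addDays_spec {D : Date} (hD : D.valid) (n : ℤ) :
    (addDays D n).valid ∧ Reduces (Conf.pending D n) (Conf.done (addDays D n)) :=
  Classical.epsilon_spec (ex_all D hD n)

lemma addDays_eq {D : Date} (hD : D.valid) {n : ℤ} {D' : Date}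
    (h : Reduces (Conf.pending D n) (Conf.done D')) : addDays D n = D' :=
  nf_unique (addDays_spec hD n).2 h

lemma addDays_congr {D D' : Date} (hD : D.valid) (hD' : D'.valid) {n n' : ℤ}
    (h : Reduces (Conf.pending D n) (Conf.pending D' n')) :
    addDays D n = addDays D' n' :=
  addDays_eq hD (Relation.ReflTransGen.trans h (addDays_spec hD' n').2)

lemma month_shift (y m : ℤ) (h1 : 1 ≤ m) (h12 : m ≤ 12) (t : ℤ) :
    addDays ⟨y, m, 1⟩ t = addDays ⟨y + m / 12, 1 + m % 12, 1⟩ (t - nbdays y m) := by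
  have hnb := nbdays_ge y m
  have hvM : (⟨y, m, 1⟩ : Date).valid := start_valid h1 h12
  have hvN : (⟨y + m / 12, 1 + m % 12, 1⟩ : Date).valid := start_valid (by omega) (by omega)
  by_cases hc : nbdays y m ≤ t
  · refine addDays_congr hvM hvN (Relation.ReflTransGen.single ?_)
    have h := Step.add_days_over (y := y) (m := m) (d := 1) (n := t) (by omega)
    rw [addMonths_next] at h
    have e : t - (nbdays y m - 1) - 1 = t - nbdays y m := by ring
    rwa [e] at h
  · symm
    refine addDays_congr hvN hvM (Relation.ReflTransGen.single ?_)
    have h := Step.add_days_under2 (y := y + m / 12) (m := 1 + m % 12)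
      (n := t - nbdays y m) (by omega) (prev_next y m h1 h12)
    have e : t - nbdays y m + nbdays y m = t := by ring
    rwa [e] at h

lemma day_shift (y m d : ℤ) (h1 : 1 ≤ m) (h12 : m ≤ 12) (hd1 : 1 ≤ d)
    (hd2 : d ≤ nbdays y m) (k : ℤ) :
    addDays ⟨y, m, d⟩ k = addDays ⟨y, m, 1⟩ (d - 1 + k) := by
  have hnb := nbdays_ge y m
  have hvD : (⟨y, m, d⟩ : Date).valid := mk_valid h1 h12 hd1 hd2
  have hvM : (⟨y, m, 1⟩ : Date).valid := start_valid h1 h12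
  by_cases hc1 : 1 ≤ d + k ∧ d + k ≤ nbdays y m
  · have e1 : addDays ⟨y, m, d⟩ k = ⟨y, m, d + k⟩ :=
      addDays_eq hvD (Relation.ReflTransGen.single (Step.add_days hc1.1 hc1.2))
    have e2 : addDays ⟨y, m, 1⟩ (d - 1 + k) = ⟨y, m, 1 + (d - 1 + k)⟩ :=
      addDays_eq hvM (Relation.ReflTransGen.single (Step.add_days (by omega) (by omega)))
    rw [e1, e2]
    simp only [Date.mk.injEq]
    exact ⟨trivial, trivial, by ring⟩
  · by_cases hc2 : nbdays y m < d + k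
    · have hA : Step (Conf.pending ⟨y, m, d⟩ k)
          (Conf.pending ⟨y + m / 12, 1 + m % 12, 1⟩ (d + k - nbdays y m - 1)) := by
        have h := Step.add_days_over (y := y) (m := m) (d := d) (n := k) (by omega)
        rw [addMonths_next] at h
        have e : k - (nbdays y m - d) - 1 = d + k - nbdays y m - 1 := by ring
        rwa [e] at h
      have hB : Step (Conf.pending ⟨y, m, 1⟩ (d - 1 + k))
          (Conf.pending ⟨y + m / 12, 1 + m % 12, 1⟩ (d + k - nbdays y m - 1)) := by
        have h := Step.add_days_over (y := y) (m := m) (d := 1) (n := d - 1 + k) (by omega)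
        rw [addMonths_next] at h
        have e : d - 1 + k - (nbdays y m - 1) - 1 = d + k - nbdays y m - 1 := by ring
        rwa [e] at h
      have hvN : (⟨y + m / 12, 1 + m % 12, 1⟩ : Date).valid :=
        start_valid (by omega) (by omega)
      rw [addDays_congr hvD hvN (Relation.ReflTransGen.single hA),
        addDays_congr hvM hvN (Relation.ReflTransGen.single hB)]
    · by_cases hd : 1 < d
      · exact addDays_congr hvD hvM
          (Relation.ReflTransGen.single (Step.add_days_under1 hd (by omega)))
      · have hd1' : d = 1 := by omega
        subst hd1'
        norm_num

lemma main_aux : ∀ (N : ℕ) (n : ℤ), n.natAbs ≤ N → ∀ y m, 1 ≤ m → m ≤ 12 → ∀ k,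
    addDays (addDays ⟨y, m, 1⟩ n) k = addDays ⟨y, m, 1⟩ (n + k) := by
  intro N
  induction N with
  | zero =>
    intro n hn y m h1 h12 k
    have hn0 : n = 0 := by omega
    subst hn0
    have hnb := nbdays_ge y m
    have e : addDays ⟨y, m, 1⟩ 0 = ⟨y, m, 1⟩ := by
      have := addDays_eq (start_valid h1 h12)
        (Relation.ReflTransGen.single (Step.add_days (y := y) (m := m) (d := 1) (n := 0) (by omega) (by omega)))
      rwa [show (1 + 0 : ℤ) = 1 by ring] at this
    rw [e, zero_add]
  | succ N ih =>
    intro n hn y m h1 h12 k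
    have hnb := nbdays_ge y m
    by_cases hc1 : 0 ≤ n ∧ n ≤ nbdays y m - 1
    · have e : addDays ⟨y, m, 1⟩ n = ⟨y, m, 1 + n⟩ :=
        addDays_eq (start_valid h1 h12)
          (Relation.ReflTransGen.single (Step.add_days (by omega) (by omega)))
      rw [e, day_shift y m (1 + n) h1 h12 (by omega) (by omega) k]
      congr 1
      ring
    · by_cases hc2 : nbdays y m ≤ n
      · have hms := month_shift y m h1 h12
        rw [hms n, hms (n + k),
          ih (n - nbdays y m) (by omega) (y + m / 12) (1 + m % 12) (by omega) (by omega) k]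
        congr 1
        ring
      · -- n ≤ -1
        have hneg : n ≤ -1 := by omega
        have hprev1 : (1:ℤ) ≤ 1 + (m - 2) % 12 := by omega
        have hprev12 : 1 + (m - 2) % 12 ≤ 12 := by omega
        have hnb' := nbdays_ge (y + (m - 2) / 12) (1 + (m - 2) % 12)
        have hms := month_shift (y + (m - 2) / 12) (1 + (m - 2) % 12) hprev1 hprev12
        have hyz : y + (m - 2) / 12 + (1 + (m - 2) % 12) / 12 = y := by omega
        have hmz : 1 + (1 + (m - 2) % 12) % 12 = m := by omega
        rw [hyz, hmz] at hms
        -- hms : addDays ⟨y + (m-2)/12, 1 + (m-2)%12, 1⟩ t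
        --       = addDays ⟨y, m, 1⟩ (t - nbdays (y+(m-2)/12) (1+(m-2)%12))
        set nbp := nbdays (y + (m - 2) / 12) (1 + (m - 2) % 12) with hnbp
        have eM : addDays ⟨y, m, 1⟩ n = addDays ⟨y + (m - 2) / 12, 1 + (m - 2) % 12, 1⟩ (n + nbp) := by
          rw [hms (n + nbp)]
          congr 1
          ring
        have eMk : addDays ⟨y, m, 1⟩ (n + k)
            = addDays ⟨y + (m - 2) / 12, 1 + (m - 2) % 12, 1⟩ (n + nbp + k) := by
          rw [hms (n + nbp + k)]
          congr 1
          ring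
        by_cases hc3 : 0 ≤ n + nbp
        · have e : addDays ⟨y + (m - 2) / 12, 1 + (m - 2) % 12, 1⟩ (n + nbp)
              = ⟨y + (m - 2) / 12, 1 + (m - 2) % 12, 1 + (n + nbp)⟩ :=
            addDays_eq (start_valid hprev1 hprev12)
              (Relation.ReflTransGen.single (Step.add_days (by omega) (by omega)))
          rw [eM, eMk, e,
            day_shift (y + (m - 2) / 12) (1 + (m - 2) % 12) (1 + (n + nbp))
              hprev1 hprev12 (by omega) (by omega) k]
          congr 1
          ring
        · rw [eM, eMk,
            ih (n + nbp) (by omega) (y + (m - 2) / 12) (1 + (m - 2) % 12) hprev1 hprev12 k]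

/-- **Additivity of day addition**: for every valid date `D` and all integers `n`, `k`,
`(D +D n) +D k = D +D (n + k)`. -/
theorem addDays_add (D : Date) (hD : D.valid) (n k : ℤ) :
    addDays (addDays D n) k = addDays D (n + k) := by
  obtain ⟨y, m, d⟩ := D
  obtain ⟨h1, h12, hd1, hd2⟩ := hD
  replace h1 : 1 ≤ m := h1
  replace h12 : m ≤ 12 := h12
  replace hd1 : 1 ≤ d := hd1
  replace hd2 : d ≤ nbdays y m := hd2
  have hds := day_shift y m d h1 h12 hd1 hd2
  rw [hds n, hds (n + k),
    main_aux (d - 1 + n).natAbs (d - 1 + n) le_rfl y m h1 h12 k]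
  congr 1
  ring
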